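/- Variational formula for classical Rényi divergence: for probability distributions P, Q on a finite set X and any real s > −1, min over probability distributions R on X of [D(R‖P) + s·D(R‖Q)] equals s·D_{1/(1+s)}(P‖Q), where D_α(P‖Q) = (1/(α−1))·log ∑_x P(x)^α Q(x)^{1−α}. -/

import Mathlib

/-- Variational formula for the classical Rényi divergence: for distributions `P, Q` on a
finite set and `s > -1`, the minimum over distributions `R` of `D(R‖P) + s·D(R‖Q)` equals
`s·D_{1/(1+s)}(P‖Q)`, where `D_α(P‖Q) = (1/(α-1)) log ∑_x P(x)^α Q(x)^{1-α}`. -/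
theorem stmt_10 {X : Type*} [Fintype X] [Nonempty X]
    (P Q : X → ℝ) (hP : ∀ x, 0 < P x) (hQ : ∀ x, 0 < Q x)
    (hP1 : ∑ x, P x = 1) (hQ1 : ∑ x, Q x = 1) (s : ℝ) (hs : -1 < s) :
    IsLeast {v : ℝ | ∃ R : X → ℝ, (∀ x, 0 ≤ R x) ∧ ∑ x, R x = 1 ∧
        v = (∑ x, R x * Real.log (R x / P x)) + s * ∑ x, R x * Real.log (R x / Q x)}
      (s * ((1 / (1 / (1 + s) - 1)) *
        Real.log (∑ x, P x ^ ((1 : ℝ) / (1 + s)) * Q x ^ (1 - (1 : ℝ) / (1 + s))))) := by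
  have hs1 : (0:ℝ) < 1 + s := by linarith
  set α : ℝ := 1 / (1 + s) with hα
  set Z : ℝ := ∑ x, P x ^ α * Q x ^ (1 - α) with hZdef
  have hZpos : 0 < Z := Finset.sum_pos (fun x _ => mul_pos (Real.rpow_pos_of_pos (hP x) _)
    (Real.rpow_pos_of_pos (hQ x) _)) Finset.univ_nonempty
  set Rs : X → ℝ := fun x => P x ^ α * Q x ^ (1 - α) / Z with hRs
  have hRspos : ∀ x, 0 < Rs x := fun x => div_pos (mul_pos (Real.rpow_pos_of_pos (hP x) _)
    (Real.rpow_pos_of_pos (hQ x) _)) hZpos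
  have hRs1 : ∑ x, Rs x = 1 := by
    simp only [hRs, ← Finset.sum_div, ← hZdef]
    exact div_self hZpos.ne'
  -- target value equals -(1+s) * log Z
  have htarget : s * ((1 / (α - 1)) * Real.log Z) = -(1 + s) * Real.log Z := by
    rcases eq_or_ne s 0 with rfl | hsne
    · have : Z = 1 := by
        simp only [hZdef, hα]
        norm_num [hP1]
      simp [this]
    · have hαm : α - 1 = -s / (1 + s) := by rw [hα]; field_simp; ring
      have h4 : (1:ℝ) / (α - 1) = -(1 + s) / s := by
        rw [hαm]
        rw [one_div, inv_div, neg_div, div_neg]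
      rw [h4]
      field_simp
  -- decomposition
  have decomp : ∀ R : X → ℝ, (∀ x, 0 ≤ R x) → ∑ x, R x = 1 →
      (∑ x, R x * Real.log (R x / P x)) + s * ∑ x, R x * Real.log (R x / Q x)
        = (1 + s) * ((∑ x, R x * Real.log (R x / Rs x)) - Real.log Z) := by
    intro R hR hR1
    have key : ∀ x, R x * Real.log (R x / P x) + s * (R x * Real.log (R x / Q x))
        = (1 + s) * (R x * Real.log (R x / Rs x) - R x * Real.log Z) := by
      intro x
      rcases eq_or_lt_of_le (hR x) with h0 | h0
      · simp [← h0]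
      · have hPx := hP x
        have hQx := hQ x
        have hmul : (0:ℝ) < P x ^ α * Q x ^ (1 - α) :=
          mul_pos (Real.rpow_pos_of_pos hPx _) (Real.rpow_pos_of_pos hQx _)
        have hRsx : Rs x = P x ^ α * Q x ^ (1 - α) / Z := rfl
        rw [Real.log_div h0.ne' hPx.ne', Real.log_div h0.ne' hQx.ne',
          Real.log_div h0.ne' (hRspos x).ne', hRsx,
          Real.log_div hmul.ne' hZpos.ne',
          Real.log_mul (Real.rpow_pos_of_pos hPx α).ne' (Real.rpow_pos_of_pos hQx _).ne',
          Real.log_rpow hPx, Real.log_rpow hQx, hα]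
        field_simp
        ring
    calc (∑ x, R x * Real.log (R x / P x)) + s * ∑ x, R x * Real.log (R x / Q x)
        = ∑ x, (R x * Real.log (R x / P x) + s * (R x * Real.log (R x / Q x))) := by
          rw [Finset.sum_add_distrib, Finset.mul_sum]
      _ = ∑ x, (1 + s) * (R x * Real.log (R x / Rs x) - R x * Real.log Z) := by
          exact Finset.sum_congr rfl (fun x _ => key x)
      _ = (1 + s) * ((∑ x, R x * Real.log (R x / Rs x)) - Real.log Z) := by
          rw [← Finset.mul_sum, Finset.sum_sub_distrib, ← Finset.sum_mul, hR1, one_mul]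
  constructor
  · refine ⟨Rs, fun x => (hRspos x).le, hRs1, ?_⟩
    rw [decomp Rs (fun x => (hRspos x).le) hRs1]
    have : ∀ x, Rs x * Real.log (Rs x / Rs x) = 0 := by
      intro x
      rw [div_self (hRspos x).ne']
      simp
    rw [Finset.sum_congr rfl (fun x _ => this x)]
    simp only [Finset.sum_const_zero, zero_sub]
    rw [htarget]
    ring
  · rintro v ⟨R, hR, hR1, rfl⟩
    rw [decomp R hR hR1, htarget]
    have hS : 0 ≤ ∑ x, R x * Real.log (R x / Rs x) := by
      have hpt : ∀ x, R x - Rs x ≤ R x * Real.log (R x / Rs x) := by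
        intro x
        rcases eq_or_lt_of_le (hR x) with h0 | h0
        · rw [← h0]; simp; exact (hRspos x).le
        · have h1 : Real.log (Rs x / R x) ≤ Rs x / R x - 1 :=
            Real.log_le_sub_one_of_pos (div_pos (hRspos x) h0)
          have h2 : Real.log (R x / Rs x) = - Real.log (Rs x / R x) := by
            rw [← Real.log_inv, inv_div]
          have h3 : R x * (Rs x / R x) = Rs x := by field_simp
          nlinarith [h0]
      calc (0:ℝ) = ∑ x, (R x - Rs x) := by rw [Finset.sum_sub_distrib, hR1, hRs1]; ring
        _ ≤ _ := Finset.sum_le_sum (fun x _ => hpt x)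
    nlinarith [hs1, hS]
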